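/- Let m ≥ 1 and let A_m be the quotient of the polynomial ring ℤ[t_1,…,t_m] by the ideal generated by t_1² − 2t_1, …, t_m² − 2t_m. Let ē_0, ē_1, …, ē_m denote the images in A_m of the elementary symmetric polynomials e_0,…,e_m in t_1,…,t_m. Then the additive subgroup of A_m generated by ē_0,…,ē_m is closed under multiplication; that is, for all 0 ≤ i, j ≤ m there exist integers c_0,…,c_m with ē_i · ē_j = Σ_{k=0}^{m} c_k · ē_k. -/

import Mathlib

open MvPolynomial

/-- The ideal `(t_1² - 2t_1, …, t_m² - 2t_m)` of `ℤ[t_1,…,t_m]`. -/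
noncomputable def relIdeal (m : ℕ) : Ideal (MvPolynomial (Fin m) ℤ) :=
  Ideal.span (Set.range fun j : Fin m => X j ^ 2 - 2 * X j)

/-- `A_m = ℤ[t_1,…,t_m]/(t_1² - 2t_1, …, t_m² - 2t_m)`. -/
noncomputable abbrev Amr (m : ℕ) := MvPolynomial (Fin m) ℤ ⧸ relIdeal m

/-- `ē_i`, the image in `A_m` of the `i`-th elementary symmetric polynomial in `t_1,…,t_m`. -/
noncomputable def ebar (m i : ℕ) : Amr m :=
  Ideal.Quotient.mk (relIdeal m) (esymm (Fin m) ℤ i)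

namespace Stmt12Aux

open Finset

variable {m : ℕ}

/-- image of a squarefree monomial in the quotient -/
noncomputable def mon (m : ℕ) (S : Finset (Fin m)) : Amr m :=
  Ideal.Quotient.mk (relIdeal m) (∏ s ∈ S, X s)

lemma mul_X (w : Fin m) (V : Finset (Fin m)) (hw : w ∈ V) :
    Ideal.Quotient.mk (relIdeal m) (X w * ∏ v ∈ V, X v)
      = (2 : ℤ) • Ideal.Quotient.mk (relIdeal m) (∏ v ∈ V, X v) := by
  have h2 : (2 : ℤ) • Ideal.Quotient.mk (relIdeal m) (∏ v ∈ V, X v)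
      = Ideal.Quotient.mk (relIdeal m) (2 * ∏ v ∈ V, X v) := by
    rw [zsmul_eq_mul, Int.cast_two, map_mul, map_ofNat]
  rw [h2, Ideal.Quotient.eq, ← Finset.mul_prod_erase V _ hw]
  have h3 : (X w * (X w * ∏ v ∈ V.erase w, X v) - 2 * (X w * ∏ v ∈ V.erase w, X v)
      : MvPolynomial (Fin m) ℤ)
      = (X w ^ 2 - 2 * X w) * ∏ v ∈ V.erase w, X v := by ring
  rw [h3]
  exact Ideal.mul_mem_right _ _ (Ideal.subset_span ⟨w, rfl⟩)

lemma prod_mul (W : Finset (Fin m)) : ∀ V : Finset (Fin m), W ⊆ V →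
    Ideal.Quotient.mk (relIdeal m) ((∏ w ∈ W, X w) * ∏ v ∈ V, X v)
      = ((2 : ℤ) ^ W.card) • Ideal.Quotient.mk (relIdeal m) (∏ v ∈ V, X v) := by
  induction W using Finset.induction_on with
  | empty => intro V _; simp
  | insert a s hw ih =>
    intro V hV
    have ha : a ∈ V := hV (Finset.mem_insert_self a s)
    have hs : s ⊆ V := fun x hx => hV (Finset.mem_insert_of_mem hx)
    rw [Finset.prod_insert hw, Finset.card_insert_of_notMem hw]
    have : ((X a * ∏ w ∈ s, X w) * ∏ v ∈ V, X v : MvPolynomial (Fin m) ℤ)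
        = (∏ w ∈ s, X w) * (X a * ∏ v ∈ V, X v) := by ring
    rw [this, map_mul, mul_X a V ha, mul_smul_comm, ← map_mul, ih V hs, smul_smul, pow_succ,
      mul_comm]

lemma mon_mul (S T : Finset (Fin m)) :
    mon m S * mon m T = ((2 : ℤ) ^ (S ∩ T).card) • mon m (S ∪ T) := by
  unfold mon
  rw [← map_mul, ← Finset.prod_union_inter, mul_comm]
  exact prod_mul (S ∩ T) (S ∪ T)
    (Finset.inter_subset_left.trans Finset.subset_union_left)

lemma ebar_eq (i : ℕ) : ebar m i = ∑ S ∈ powersetCard i (univ : Finset (Fin m)), mon m S := by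
  unfold ebar mon
  rw [esymm, map_sum]

/-- the coefficient of `t̄_U` in `ē_i ē_j`. -/
noncomputable def cf (m i j : ℕ) (U : Finset (Fin m)) : ℤ :=
  ∑ p ∈ ((powersetCard i (univ : Finset (Fin m)) ×ˢ powersetCard j (univ : Finset (Fin m))).filter
      (fun p => p.1 ∪ p.2 = U)), (2 : ℤ) ^ ((p.1 ∩ p.2).card)

lemma cf_card_eq (i j : ℕ) {U U' : Finset (Fin m)} (h : U.card = U'.card) :
    cf m i j U = cf m i j U' := by
  classical
  set e : {x // x ∈ U} ≃ {x // x ∈ U'} := Finset.equivOfCardEq h with he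
  set σ : Equiv.Perm (Fin m) := e.extendSubtype with hσ
  have himg : ∀ {V : Finset (Fin m)}, V ⊆ U → Finset.image σ V ⊆ U' := by
    intro V hV x hx
    obtain ⟨y, hy, rfl⟩ := Finset.mem_image.mp hx
    exact e.extendSubtype_mem y (hV hy)
  have hU : Finset.image σ U = U' := by
    apply Finset.eq_of_subset_of_card_le (himg le_rfl)
    rw [Finset.card_image_of_injective _ σ.injective, h]
  have himg' : ∀ {V : Finset (Fin m)}, V ⊆ U' → Finset.image σ.symm V ⊆ U := by
    intro V hV x hx
    obtain ⟨y, hy, rfl⟩ := Finset.mem_image.mp hx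
    have : y ∈ Finset.image σ U := hU ▸ hV hy
    obtain ⟨z, hz, rfl⟩ := Finset.mem_image.mp this
    simpa using hz
  apply Finset.sum_nbij' (i := fun p => (Finset.image σ p.1, Finset.image σ p.2))
    (j := fun p => (Finset.image σ.symm p.1, Finset.image σ.symm p.2))
  · rintro ⟨S, T⟩ hST
    simp only [Finset.mem_filter, Finset.mem_product, Finset.mem_powersetCard_univ] at hST ⊢
    obtain ⟨⟨hSi, hTj⟩, hunion⟩ := hST
    refine ⟨⟨?_, ?_⟩, ?_⟩
    · rw [Finset.card_image_of_injective _ σ.injective, hSi]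
    · rw [Finset.card_image_of_injective _ σ.injective, hTj]
    · rw [← Finset.image_union, hunion, hU]
  · rintro ⟨S, T⟩ hST
    simp only [Finset.mem_filter, Finset.mem_product, Finset.mem_powersetCard_univ] at hST ⊢
    obtain ⟨⟨hSi, hTj⟩, hunion⟩ := hST
    refine ⟨⟨?_, ?_⟩, ?_⟩
    · rw [Finset.card_image_of_injective _ σ.symm.injective, hSi]
    · rw [Finset.card_image_of_injective _ σ.symm.injective, hTj]
    · have : Finset.image σ.symm (S ∪ T) = Finset.image σ.symm U' := by rw [hunion]
      rw [Finset.image_union] at this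
      rw [this, ← hU, Finset.image_image]
      simp
  · rintro ⟨S, T⟩ _
    simp [Finset.image_image]
  · rintro ⟨S, T⟩ _
    simp [Finset.image_image]
  · rintro ⟨S, T⟩ _
    rw [← Finset.image_inter _ _ σ.injective, Finset.card_image_of_injective _ σ.injective]

lemma key (i j : ℕ) :
    ebar m i * ebar m j
      = ∑ k ∈ Finset.range (m + 1),
          ∑ U ∈ powersetCard k (univ : Finset (Fin m)), cf m i j U • mon m U := by
  classical
  rw [ebar_eq, ebar_eq, Finset.sum_mul_sum]
  have step1 : (∑ S ∈ powersetCard i (univ : Finset (Fin m)),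
        ∑ T ∈ powersetCard j (univ : Finset (Fin m)), mon m S * mon m T)
      = ∑ p ∈ powersetCard i (univ : Finset (Fin m)) ×ˢ powersetCard j (univ : Finset (Fin m)),
          ((2 : ℤ) ^ ((p.1 ∩ p.2).card)) • mon m (p.1 ∪ p.2) := by
    rw [Finset.sum_product]
    exact Finset.sum_congr rfl fun S _ => Finset.sum_congr rfl fun T _ => mon_mul S T
  rw [step1]
  rw [← Finset.sum_fiberwise_of_maps_to
    (g := fun p : Finset (Fin m) × Finset (Fin m) => p.1 ∪ p.2)
    (t := (univ : Finset (Fin m)).powerset)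
    (fun p _ => Finset.mem_powerset.mpr (Finset.subset_univ _))]
  have step2 : ∀ U ∈ (univ : Finset (Fin m)).powerset,
      (∑ p ∈ ((powersetCard i (univ : Finset (Fin m)) ×ˢ
            powersetCard j (univ : Finset (Fin m))).filter (fun p => p.1 ∪ p.2 = U)),
        ((2 : ℤ) ^ ((p.1 ∩ p.2).card)) • mon m (p.1 ∪ p.2))
      = cf m i j U • mon m U := by
    intro U _
    rw [cf, Finset.sum_smul]
    apply Finset.sum_congr rfl
    rintro ⟨S, T⟩ hST
    rw [Finset.mem_filter] at hST
    rw [hST.2]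
  rw [Finset.sum_congr rfl step2]
  rw [← Finset.sum_fiberwise_of_maps_to
    (g := fun U : Finset (Fin m) => U.card) (t := Finset.range (m + 1))
    (fun U hU => Finset.mem_range.mpr (Nat.lt_succ_of_le (by
      simpa using Finset.card_le_card (Finset.mem_powerset.mp hU))))]
  apply Finset.sum_congr rfl
  intro k _
  apply Finset.sum_congr
  · rw [powersetCard_eq_filter]
  · intro U _; rfl

end Stmt12Aux

/-- The additive subgroup of `A_m` generated by `ē_0, …, ē_m` is closed under multiplication:
for all `0 ≤ i, j ≤ m` there are integers `c_0, …, c_m` with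
`ē_i · ē_j = Σ_{k=0}^{m} c_k · ē_k`. -/
theorem stmt12 (m : ℕ) (hm : 1 ≤ m) (i j : ℕ) (hi : i ≤ m) (hj : j ≤ m) :
    ∃ c : Fin (m + 1) → ℤ,
      ebar m i * ebar m j = ∑ k : Fin (m + 1), c k • ebar m (k : ℕ) := by
  classical
  open Stmt12Aux Finset in
  have pick : ∀ k : Fin (m + 1), ∃ U : Finset (Fin m), U.card = (k : ℕ) := by
    intro k
    obtain ⟨U, -, hU⟩ := Finset.exists_subset_card_eq
      (s := (univ : Finset (Fin m))) (n := (k : ℕ))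
      (by simpa using Nat.lt_succ_iff.mp k.isLt)
    exact ⟨U, hU⟩
  refine ⟨fun k => cf m i j (pick k).choose, ?_⟩
  rw [Stmt12Aux.key i j, ← Fin.sum_univ_eq_sum_range
    (f := fun k => ∑ U ∈ powersetCard k (univ : Finset (Fin m)), cf m i j U • mon m U)]
  apply Finset.sum_congr rfl
  intro k _
  have hconst : ∀ U ∈ powersetCard (k : ℕ) (univ : Finset (Fin m)),
      cf m i j U • mon m U = cf m i j (pick k).choose • mon m U := by
    intro U hU
    rw [cf_card_eq i j (by
      rw [(pick k).choose_spec, Finset.mem_powersetCard_univ.mp hU])]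
  rw [Finset.sum_congr rfl hconst, ← Finset.smul_sum, ← Stmt12Aux.ebar_eq]
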